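/- Let v > 4 and let l ∈ Z_v* have multiplicative order exactly 3. If l² + l + 1 ≢ 0 (mod v) then N(v,3,l) = 0, and if l² + l + 1 ≡ 0 (mod v) then N(v,3,l) = φ(v), where φ is Euler's totient function. -/

import Mathlib

open scoped Pointwise

/-- `B_con(v,3)`: base lines of connected cyclic configurations of type (v₃). -/
def Bcon3 (v : ℕ) : Set (Finset (ZMod v)) :=
  {X | X.card = 3 ∧ (X - X).card = 7 ∧
    AddSubgroup.closure ((X - X : Finset (ZMod v)) : Set (ZMod v)) = ⊤}

section Aux
variable {v : ℕ}

private lemma natne (hv : 4 < v) {n : ℕ} (h1 : 0 < n) (h2 : n < 5) : (n : ZMod v) ≠ 0 := by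
  haveI : NeZero v := ⟨by omega⟩
  intro h
  rw [ZMod.natCast_eq_zero_iff] at h
  have := Nat.le_of_dvd h1 h
  omega

private lemma one_ne (hv : 4 < v) : (1 : ZMod v) ≠ 0 := by
  have h := natne hv (n := 1) one_pos (by norm_num); simpa using h

private lemma two_ne (hv : 4 < v) : (2 : ZMod v) ≠ 0 := by
  have h := natne hv (n := 2) (by norm_num) (by norm_num); simpa using h

private lemma three_ne (hv : 4 < v) : (3 : ZMod v) ≠ 0 := by
  have h := natne hv (n := 3) (by norm_num) (by norm_num); simpa using h

private lemma ucancel (u : (ZMod v)ˣ) {c d : ZMod v} (h : c * ↑u = d * ↑u) : c = d := by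
  have h2 := congrArg (fun z => z * ((u⁻¹ : (ZMod v)ˣ) : ZMod v)) h
  simpa [mul_assoc, Units.mul_inv] using h2

private lemma uzero (u : (ZMod v)ˣ) {c : ZMod v} (h : c * ↑u = 0) : c = 0 :=
  ucancel u (by simpa using h)

private lemma isUnit_of_gen (hv : 4 < v) {a : ZMod v} (X : Finset (ZMod v))
    (hcl : AddSubgroup.closure ((X - X : Finset (ZMod v)) : Set (ZMod v)) = ⊤)
    (h : ∀ z ∈ X, ∃ c, z = c * a) : IsUnit a := by
  haveI : NeZero v := ⟨by omega⟩
  have hsub : AddSubgroup.closure ((X - X : Finset (ZMod v)) : Set (ZMod v)) ≤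
      AddSubgroup.zmultiples a := by
    rw [AddSubgroup.closure_le]
    intro z hz
    rw [Finset.mem_coe, Finset.mem_sub] at hz
    obtain ⟨p, hp, q, hq, rfl⟩ := hz
    obtain ⟨c, rfl⟩ := h p hp
    obtain ⟨d, rfl⟩ := h q hq
    refine AddSubgroup.mem_zmultiples_iff.mpr ⟨(((c - d).val : ℕ) : ℤ), ?_⟩
    rw [zsmul_eq_mul]
    push_cast
    rw [ZMod.natCast_val, ZMod.cast_id]
    ring
  rw [hcl] at hsub
  obtain ⟨k, hk⟩ := AddSubgroup.mem_zmultiples_iff.mp (hsub (AddSubgroup.mem_top 1))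
  rw [zsmul_eq_mul] at hk
  exact IsUnit.of_mul_eq_one (a := a) _ (by rw [mul_comm]; exact hk)

private lemma sub_triple (a b : ZMod v) :
    ({0, a, b} : Finset (ZMod v)) - {0, a, b} = {0, a, -a, b, -b, a - b, b - a} := by
  apply Finset.Subset.antisymm
  · rw [Finset.sub_subset_iff]
    intro x hx y hy
    simp only [Finset.mem_insert, Finset.mem_singleton] at hx hy
    rcases hx with rfl | rfl | rfl <;> rcases hy with rfl | rfl | rfl <;> simp
  · simp only [Finset.insert_subset_iff, Finset.singleton_subset_iff]
    refine ⟨?_, ?_, ?_, ?_, ?_, ?_, ?_⟩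
    · simpa using Finset.sub_mem_sub (s := ({0,a,b} : Finset (ZMod v))) (t := {0,a,b})
        (a := (0 : ZMod v)) (b := 0) (by simp) (by simp)
    · simpa using Finset.sub_mem_sub (s := ({0,a,b} : Finset (ZMod v))) (t := {0,a,b})
        (a := a) (b := (0 : ZMod v)) (by simp) (by simp)
    · simpa using Finset.sub_mem_sub (s := ({0,a,b} : Finset (ZMod v))) (t := {0,a,b})
        (a := (0 : ZMod v)) (b := a) (by simp) (by simp)
    · simpa using Finset.sub_mem_sub (s := ({0,a,b} : Finset (ZMod v))) (t := {0,a,b})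
        (a := b) (b := (0 : ZMod v)) (by simp) (by simp)
    · simpa using Finset.sub_mem_sub (s := ({0,a,b} : Finset (ZMod v))) (t := {0,a,b})
        (a := (0 : ZMod v)) (b := b) (by simp) (by simp)
    · exact Finset.sub_mem_sub (by simp) (by simp)
    · exact Finset.sub_mem_sub (by simp) (by simp)

private lemma l3 {v : ℕ} {l : (ZMod v)ˣ} (hord : orderOf l = 3) : (l : ZMod v) ^ 3 = 1 := by
  have h := pow_orderOf_eq_one l
  rw [hord] at h
  have := congrArg (Units.val) h
  simpa using this

private lemma lne1 {v : ℕ} {l : (ZMod v)ˣ} (hord : orderOf l = 3) : (l : ZMod v) ≠ 1 := by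
  intro h
  have : l = 1 := Units.ext (by simpa using h)
  rw [this, orderOf_one] at hord
  omega

private lemma lnem1 {v : ℕ} {l : (ZMod v)ˣ} (hord : orderOf l = 3) : (l : ZMod v) ≠ -1 := by
  intro h
  have h2 : l ^ 2 = 1 := Units.ext (by
    rw [Units.val_pow_eq_pow_val, h]; norm_num)
  have := orderOf_dvd_of_pow_eq_one h2
  rw [hord] at this
  norm_num at this

private lemma char_aux (hv : 4 < v) (L Li : ZMod v) (hLi : L * Li = 1)
    (hL3 : L ^ 3 = 1) (hL1 : L ≠ 1) (hLm1 : L ≠ -1) (X : Finset (ZMod v)) :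
    (X ∈ Bcon3 v ∧ (0 : ZMod v) ∈ X ∧
      ∃ x ∈ X, X.image (fun y => L * y) = X.image (fun y => y - x)) ↔
    (L ^ 2 + L + 1 = 0 ∧ ∃ a : (ZMod v)ˣ, X = {0, (a : ZMod v), (L + 1) * a}) := by
  haveI : NeZero v := ⟨by omega⟩
  have h1 := one_ne hv
  have h2 := two_ne hv
  have h3 := three_ne hv
  have hLiL : Li * L = 1 := by rw [mul_comm]; exact hLi
  have lcan : ∀ {c d : ZMod v}, L * c = L * d → c = d := by
    intro c d h
    have h' := congrArg (fun z => Li * z) h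
    rwa [← mul_assoc, ← mul_assoc, hLiL, one_mul, one_mul] at h'
  have hL0 : L ≠ 0 := fun h => h1 (by rw [← hLi, h, zero_mul])
  have cube : ∀ z : ZMod v, L * (L * (L * z)) = z := fun z => by
    rw [show L * (L * (L * z)) = L ^ 3 * z by ring, hL3, one_mul]
  constructor
  · rintro ⟨⟨hc, -, hcl⟩, h0, x, hxX, himg⟩
    have h2' : (X.erase 0).card = 2 := by rw [Finset.card_erase_of_mem h0, hc]
    obtain ⟨a, b, hab, hE⟩ := Finset.card_eq_two.mp h2'
    have ha0 : a ≠ 0 := Finset.ne_of_mem_erase (hE ▸ (by simp : a ∈ ({a, b} : Finset (ZMod v))))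
    have hb0 : b ≠ 0 := Finset.ne_of_mem_erase (hE ▸ (by simp : b ∈ ({a, b} : Finset (ZMod v))))
    have hX : X = {0, a, b} := by rw [← Finset.insert_erase h0, hE]
    subst hX
    rw [show Finset.image (fun y => L * y) {0, a, b} = {0, L * a, L * b} by
          simp [Finset.image_insert],
        show Finset.image (fun y => y - x) {0, a, b} = {-x, a - x, b - x} by
          simp [Finset.image_insert]] at himg
    have hLa : L * a ≠ 0 := fun h => ha0 (lcan (by simpa using h))
    have hLb : L * b ≠ 0 := fun h => hb0 (lcan (by simpa using h))
    have hxcases : x = 0 ∨ x = a ∨ x = b := by simpa using hxX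
    rcases hxcases with hx | hx | hx <;> rw [hx] at himg
    · -- x = 0
      simp only [neg_zero, sub_zero] at himg
      have hma : L * a = 0 ∨ L * a = a ∨ L * a = b := by
        have : L * a ∈ ({0, a, b} : Finset (ZMod v)) := himg ▸ (by simp)
        simpa using this
      have hmb : L * b = 0 ∨ L * b = a ∨ L * b = b := by
        have : L * b ∈ ({0, a, b} : Finset (ZMod v)) := himg ▸ (by simp)
        simpa using this
      rcases hma with hma1 | hma1 | hma1
      · exact absurd hma1 hLa
      · rcases hmb with hmb1 | hmb1 | hmb1
        · exact absurd hmb1 hLb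
        · exact absurd (lcan (hmb1.trans hma1.symm)) (Ne.symm hab)
        · exfalso
          have hfixX : ∀ z ∈ ({0, a, b} : Finset (ZMod v)), L * z = z := by
            intro z hz
            rcases (by simpa using hz : z = 0 ∨ z = a ∨ z = b) with rfl | rfl | rfl
            · simp
            · exact hma1
            · exact hmb1
          have heqon : Set.EqOn (AddMonoidHom.mulLeft L) (AddMonoidHom.id (ZMod v))
              ((({0, a, b} : Finset (ZMod v)) - {0, a, b} : Finset (ZMod v)) :
                Set (ZMod v)) := by
            intro z hz
            rw [Finset.mem_coe, Finset.mem_sub] at hz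
            obtain ⟨p, hp, q, hq, rfl⟩ := hz
            show L * (p - q) = p - q
            rw [mul_sub, hfixX p hp, hfixX q hq]
          have h1' := AddMonoidHom.eqOn_closure heqon
            (by rw [hcl]; exact AddSubgroup.mem_top 1)
          have : L * 1 = 1 := h1'
          exact hL1 (by simpa using this)
      · -- L*a = b
        rcases hmb with hmb1 | hmb1 | hmb1
        · exact absurd hmb1 hLb
        · have hcb := cube a
          rw [hma1, hmb1, hma1] at hcb
          exact absurd hcb (Ne.symm hab)
        · exact absurd (lcan (hma1.trans hmb1.symm)) hab
    · -- x = a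
      simp only [sub_self] at himg
      have hma : L * a = -a ∨ L * a = 0 ∨ L * a = b - a := by
        have : L * a ∈ ({-a, 0, b - a} : Finset (ZMod v)) := himg ▸ (by simp)
        simpa using this
      have hmb : L * b = -a ∨ L * b = 0 ∨ L * b = b - a := by
        have : L * b ∈ ({-a, 0, b - a} : Finset (ZMod v)) := himg ▸ (by simp)
        simpa using this
      rcases hmb with hmb1 | hmb1 | hmb1
      · -- L*b = -a : good case
        rcases hma with hma1 | hma1 | hma1
        · exact absurd (lcan (hma1.trans hmb1.symm)) hab
        · exact absurd hma1 hLa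
        · -- L*a = b - a
          have hb : b = (L + 1) * a := by linear_combination -hma1
          have hz : (L ^ 2 + L + 1) * a = 0 := by linear_combination hmb1 - L * hb
          have hunit : IsUnit a := by
            refine isUnit_of_gen hv _ hcl ?_
            intro z hz'
            rcases (by simpa using hz' : z = 0 ∨ z = a ∨ z = b) with rfl | rfl | rfl
            · exact ⟨0, by ring⟩
            · exact ⟨1, by ring⟩
            · exact ⟨L + 1, hb⟩
          obtain ⟨u, hu⟩ := hunit
          refine ⟨uzero u (by rw [hu]; exact hz), u, ?_⟩
          rw [hu, ← hb]
      · exact absurd hmb1 hLb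
      · -- L*b = b - a
        have hLLb : L * (L * b) = b := by
          rcases hma with hma1 | hma1 | hma1
          · rw [hmb1, mul_sub, hmb1, hma1]; ring
          · exact absurd hma1 hLa
          · exact absurd (lcan (hma1.trans hmb1.symm)) hab
        have hb' : L * b = b := by
          have hcb := cube b
          rw [hLLb] at hcb
          exact hcb
        rw [hmb1] at hb'
        exact absurd (by linear_combination -hb' : a = 0) ha0
    · -- x = b
      simp only [sub_self] at himg
      have hma : L * a = -b ∨ L * a = a - b ∨ L * a = 0 := by
        have : L * a ∈ ({-b, a - b, 0} : Finset (ZMod v)) := himg ▸ (by simp)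
        simpa using this
      have hmb : L * b = -b ∨ L * b = a - b ∨ L * b = 0 := by
        have : L * b ∈ ({-b, a - b, 0} : Finset (ZMod v)) := himg ▸ (by simp)
        simpa using this
      rcases hma with hma1 | hma1 | hma1
      · -- L*a = -b : good case
        rcases hmb with hmb1 | hmb1 | hmb1
        · exact absurd (lcan (hmb1.trans hma1.symm)) (Ne.symm hab)
        · -- L*b = a - b
          have ha' : a = (L + 1) * b := by linear_combination -hmb1
          have hz : (L ^ 2 + L + 1) * b = 0 := by linear_combination hma1 - L * ha'
          have hunit : IsUnit b := by
            refine isUnit_of_gen hv _ hcl ?_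
            intro z hz'
            rcases (by simpa using hz' : z = 0 ∨ z = a ∨ z = b) with rfl | rfl | rfl
            · exact ⟨0, by ring⟩
            · exact ⟨L + 1, ha'⟩
            · exact ⟨1, by ring⟩
          obtain ⟨u, hu⟩ := hunit
          refine ⟨uzero u (by rw [hu]; exact hz), u, ?_⟩
          rw [hu, ← ha', Finset.pair_comm a b]
        · exact absurd hmb1 hLb
      · -- L*a = a - b
        have hLLa : L * (L * a) = a := by
          rcases hmb with hmb1 | hmb1 | hmb1
          · rw [hma1, mul_sub, hma1, hmb1]; ring
          · exact absurd (lcan (hmb1.trans hma1.symm)) (Ne.symm hab)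
          · exact absurd hmb1 hLb
        have ha2 : L * a = a := by
          have hca := cube a
          rw [hLLa] at hca
          exact hca
        rw [hma1] at ha2
        exact absurd (by linear_combination -ha2 : b = 0) hb0
      · exact absurd hma1 hLa
  · rintro ⟨hl0, u, rfl⟩
    -- the 21 inequalities
    have q01 : (0 : ZMod v) ≠ (u : ZMod v) := by
      intro h
      exact h1 (ucancel u (by linear_combination -h) : (1 : ZMod v) = 0)
    have q02 : (0 : ZMod v) ≠ -(u : ZMod v) := by
      intro h
      have hcd : (0 : ZMod v) = -1 := ucancel u (by linear_combination h)
      exact h1 (by linear_combination hcd)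
    have q03 : (0 : ZMod v) ≠ (L + 1) * u := by
      intro h
      have hcd : (0 : ZMod v) = L + 1 := ucancel u (by linear_combination h)
      exact hLm1 (by linear_combination -hcd)
    have q04 : (0 : ZMod v) ≠ -((L + 1) * u) := by
      intro h
      have hcd : (0 : ZMod v) = -(L + 1) := ucancel u (by linear_combination h)
      exact hLm1 (by linear_combination hcd)
    have q05 : (0 : ZMod v) ≠ (u : ZMod v) - (L + 1) * u := by
      intro h
      have hcd : (0 : ZMod v) = -L := ucancel u (by linear_combination h)
      exact hL0 (by linear_combination hcd)
    have q06 : (0 : ZMod v) ≠ (L + 1) * u - (u : ZMod v) := by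
      intro h
      have hcd : (0 : ZMod v) = L := ucancel u (by linear_combination h)
      exact hL0 hcd.symm
    have q12 : (u : ZMod v) ≠ -(u : ZMod v) := by
      intro h
      have hcd : (1 : ZMod v) = -1 := ucancel u (by linear_combination h)
      exact h2 (by linear_combination hcd)
    have q13 : (u : ZMod v) ≠ (L + 1) * u := by
      intro h
      have hcd : (1 : ZMod v) = L + 1 := ucancel u (by linear_combination h)
      exact hL0 (by linear_combination -hcd)
    have q14 : (u : ZMod v) ≠ -((L + 1) * u) := by
      intro h
      have hcd : (1 : ZMod v) = -(L + 1) := ucancel u (by linear_combination h)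
      exact h3 (by linear_combination (1 - L) * hcd + hl0)
    have q15 : (u : ZMod v) ≠ (u : ZMod v) - (L + 1) * u := by
      intro h
      have hcd : (1 : ZMod v) = -L := ucancel u (by linear_combination h)
      exact hLm1 (by linear_combination hcd)
    have q16 : (u : ZMod v) ≠ (L + 1) * u - (u : ZMod v) := by
      intro h
      have hcd : (1 : ZMod v) = L := ucancel u (by linear_combination h)
      exact hL1 hcd.symm
    have q23 : -(u : ZMod v) ≠ (L + 1) * u := by
      intro h
      have hcd : (-1 : ZMod v) = L + 1 := ucancel u (by linear_combination h)
      exact h3 (by linear_combination (L - 1) * hcd + hl0)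
    have q24 : -(u : ZMod v) ≠ -((L + 1) * u) := by
      intro h
      have hcd : (-1 : ZMod v) = -(L + 1) := ucancel u (by linear_combination h)
      exact hL0 (by linear_combination hcd)
    have q25 : -(u : ZMod v) ≠ (u : ZMod v) - (L + 1) * u := by
      intro h
      have hcd : (-1 : ZMod v) = -L := ucancel u (by linear_combination h)
      exact hL1 (by linear_combination hcd)
    have q26 : -(u : ZMod v) ≠ (L + 1) * u - (u : ZMod v) := by
      intro h
      have hcd : (-1 : ZMod v) = L := ucancel u (by linear_combination h)
      exact hLm1 hcd.symm
    have q34 : (L + 1) * (u : ZMod v) ≠ -((L + 1) * u) := by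
      intro h
      have hcd : L + 1 = -(L + 1) := ucancel u (by linear_combination h)
      exact h2 (by linear_combination (-L) * hcd + 2 * hl0)
    have q35 : (L + 1) * (u : ZMod v) ≠ (u : ZMod v) - (L + 1) * u := by
      intro h
      have hcd : L + 1 = -L := ucancel u (by linear_combination h)
      exact h3 (by linear_combination (-(2 * L + 1)) * hcd + 4 * hl0)
    have q36 : (L + 1) * (u : ZMod v) ≠ (L + 1) * u - (u : ZMod v) := by
      intro h
      have hcd : L + 1 = L := ucancel u (by linear_combination h)
      exact h1 (by linear_combination hcd)
    have q45 : -((L + 1) * (u : ZMod v)) ≠ (u : ZMod v) - (L + 1) * u := by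
      intro h
      have hcd : -(L + 1) = -L := ucancel u (by linear_combination h)
      exact h1 (by linear_combination -hcd)
    have q46 : -((L + 1) * (u : ZMod v)) ≠ (L + 1) * u - (u : ZMod v) := by
      intro h
      have hcd : -(L + 1) = L := ucancel u (by linear_combination h)
      exact h3 (by linear_combination (2 * L + 1) * hcd + 4 * hl0)
    have q56 : (u : ZMod v) - (L + 1) * u ≠ (L + 1) * u - (u : ZMod v) := by
      intro h
      have hcd : (-L : ZMod v) = L := ucancel u (by linear_combination h)
      exact h2 (by linear_combination (L + 1) * hcd + 2 * hl0)
    refine ⟨⟨?_, ?_, ?_⟩, by simp, ⟨(u : ZMod v), by simp, ?_⟩⟩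
    · -- card = 3
      rw [Finset.card_insert_of_notMem (by
            simp only [Finset.mem_insert, Finset.mem_singleton]
            push_neg
            exact ⟨q01, q03⟩),
          Finset.card_insert_of_notMem (by
            simp only [Finset.mem_singleton]
            exact q13),
          Finset.card_singleton]
    · -- card (X - X) = 7
      rw [sub_triple]
      rw [Finset.card_insert_of_notMem (by
            simp only [Finset.mem_insert, Finset.mem_singleton]
            push_neg
            exact ⟨q01, q02, q03, q04, q05, q06⟩),
          Finset.card_insert_of_notMem (by
            simp only [Finset.mem_insert, Finset.mem_singleton]
            push_neg
            exact ⟨q12, q13, q14, q15, q16⟩),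
          Finset.card_insert_of_notMem (by
            simp only [Finset.mem_insert, Finset.mem_singleton]
            push_neg
            exact ⟨q23, q24, q25, q26⟩),
          Finset.card_insert_of_notMem (by
            simp only [Finset.mem_insert, Finset.mem_singleton]
            push_neg
            exact ⟨q34, q35, q36⟩),
          Finset.card_insert_of_notMem (by
            simp only [Finset.mem_insert, Finset.mem_singleton]
            push_neg
            exact ⟨q45, q46⟩),
          Finset.card_insert_of_notMem (by
            simp only [Finset.mem_singleton]
            exact q56),
          Finset.card_singleton]
    · -- closure = ⊤
      have hmemA : (u : ZMod v) ∈
          (({0, (u : ZMod v), (L + 1) * u} : Finset (ZMod v)) -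
            {0, (u : ZMod v), (L + 1) * u} : Finset (ZMod v)) := by
        simpa using Finset.sub_mem_sub
          (s := ({0, (u : ZMod v), (L + 1) * u} : Finset (ZMod v)))
          (t := {0, (u : ZMod v), (L + 1) * u})
          (a := (u : ZMod v)) (b := (0 : ZMod v)) (by simp) (by simp)
      rw [eq_top_iff]
      rintro z -
      have hA : (u : ZMod v) ∈ AddSubgroup.closure
          ((({0, (u : ZMod v), (L + 1) * u} : Finset (ZMod v)) -
            {0, (u : ZMod v), (L + 1) * u} : Finset (ZMod v)) : Set (ZMod v)) :=
        AddSubgroup.subset_closure (Finset.mem_coe.mpr hmemA)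
      have hz : (z * ((u⁻¹ : (ZMod v)ˣ) : ZMod v)).val • ((u : ZMod v)) = z := by
        rw [nsmul_eq_mul, ZMod.natCast_val, ZMod.cast_id, mul_assoc, Units.inv_mul, mul_one]
      exact hz ▸ nsmul_mem hA _
    · -- the image condition with x = u
      have e3 : L * ((L + 1) * (u : ZMod v)) = -(u : ZMod v) := by
        linear_combination (u : ZMod v) * hl0
      have e1 : Finset.image (fun y => L * y) {0, (u : ZMod v), (L + 1) * u} =
          {0, L * u, -(u : ZMod v)} := by
        simp only [Finset.image_insert, Finset.image_singleton, mul_zero]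
        rw [e3]
      have e2 : Finset.image (fun y => y - (u : ZMod v)) {0, (u : ZMod v), (L + 1) * u} =
          {-(u : ZMod v), 0, L * u} := by
        simp only [Finset.image_insert, Finset.image_singleton, zero_sub, sub_self]
        rw [show (L + 1) * (u : ZMod v) - u = L * u by ring]
      rw [e1, e2]
      ext z
      simp only [Finset.mem_insert, Finset.mem_singleton]
      tauto

end Aux


/-- `N(v,3,l)`: the number of `X ∈ B_con(v,3)` with `0 ∈ X` such that
`lX = X - x` for some `x ∈ X`. -/
noncomputable def Nparam3 (v : ℕ) (l : (ZMod v)ˣ) : ℕ :=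
  Nat.card {X : Finset (ZMod v) // X ∈ Bcon3 v ∧ (0 : ZMod v) ∈ X ∧
    ∃ x ∈ X, X.image (fun y => (l : ZMod v) * y) = X.image (fun y => y - x)}

/-- if `l ∈ Z_v*` has multiplicative order 3, then `N(v,3,l) = 0`
when `l² + l + 1 ≢ 0 (mod v)`, and `N(v,3,l) = φ(v)` when `l² + l + 1 ≡ 0 (mod v)`. -/
theorem Nparam3_of_order_three
    (v : ℕ) (hv : 4 < v) (l : (ZMod v)ˣ) (hord : orderOf l = 3) :
    ((l : ZMod v) ^ 2 + (l : ZMod v) + 1 ≠ 0 → Nparam3 v l = 0) ∧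
    ((l : ZMod v) ^ 2 + (l : ZMod v) + 1 = 0 → Nparam3 v l = Nat.totient v) := by
  haveI : NeZero v := ⟨by omega⟩
  haveI : Fact (1 < v) := ⟨by omega⟩
  have hchar := fun X => char_aux hv ((l : ZMod v)) (((l⁻¹ : (ZMod v)ˣ) : ZMod v))
    (Units.mul_inv l) (l3 hord) (lne1 hord) (lnem1 hord) X
  constructor
  · intro hne
    have hempty : IsEmpty {X : Finset (ZMod v) // X ∈ Bcon3 v ∧ (0 : ZMod v) ∈ X ∧
        ∃ x ∈ X, X.image (fun y => (l : ZMod v) * y) = X.image (fun y => y - x)} := by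
      constructor
      rintro ⟨X, hX⟩
      exact hne ((hchar X).mp hX).1
    unfold Nparam3
    exact Nat.card_of_isEmpty
  · intro h0
    have hbij : Function.Bijective (fun u : (ZMod v)ˣ =>
        (⟨{0, (u : ZMod v), ((l : ZMod v) + 1) * u}, (hchar _).mpr ⟨h0, u, rfl⟩⟩ :
          {X : Finset (ZMod v) // X ∈ Bcon3 v ∧ (0 : ZMod v) ∈ X ∧
            ∃ x ∈ X, X.image (fun y => (l : ZMod v) * y) = X.image (fun y => y - x)})) := by
      constructor
      · intro u1 u2 h
        have hs : ({0, (u1 : ZMod v), ((l : ZMod v) + 1) * u1} : Finset (ZMod v)) =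
            {0, (u2 : ZMod v), ((l : ZMod v) + 1) * u2} := congrArg Subtype.val h
        have hm1 : (u1 : ZMod v) = 0 ∨ (u1 : ZMod v) = (u2 : ZMod v) ∨
            (u1 : ZMod v) = ((l : ZMod v) + 1) * u2 := by
          have : (u1 : ZMod v) ∈
              ({0, (u2 : ZMod v), ((l : ZMod v) + 1) * u2} : Finset (ZMod v)) :=
            hs ▸ (by simp)
          simpa using this
        rcases hm1 with hA | hA | hA
        · exact absurd hA (Units.ne_zero u1)
        · exact Units.ext hA
        · have hm2 : (u2 : ZMod v) = 0 ∨ (u2 : ZMod v) = (u1 : ZMod v) ∨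
              (u2 : ZMod v) = ((l : ZMod v) + 1) * u1 := by
            have : (u2 : ZMod v) ∈
                ({0, (u1 : ZMod v), ((l : ZMod v) + 1) * u1} : Finset (ZMod v)) :=
              hs.symm ▸ (by simp)
            simpa using this
          rcases hm2 with hB | hB | hB
          · exact absurd hB (Units.ne_zero u2)
          · exact (Units.ext hB).symm
          · exfalso
            have hcd : (l : ZMod v) = 1 := ucancel u1 (by
              linear_combination -hA - ((l : ZMod v) + 1) * hB - (u1 : ZMod v) * h0)
            exact lne1 hord hcd
      · rintro ⟨X, hX⟩
        obtain ⟨-, u, hXu⟩ := (hchar X).mp hX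
        exact ⟨u, Subtype.ext hXu.symm⟩
    unfold Nparam3
    rw [← Nat.card_congr (Equiv.ofBijective _ hbij), Nat.card_eq_fintype_card,
      ZMod.card_units_eq_totient]
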